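/- Let k be a field of characteristic ≠ 3 containing a primitive cube root of unity ω. Let σ be the k-automorphism of k(x,y) given by σ(x) = y, σ(y) = 1/(xy). Define u = (1 + ω⁻¹x + ωxy)/(1 + x + xy) and v = (1 + ωx + ω⁻¹xy)/(1 + x + xy). Then k(u,v) = k(x,y), σ(u) = ωu, and σ(v) = ω⁻¹v. -/

import Mathlib

/-- Lemma (Chu–Hoshi–Hu–Kang): for `σ : x ↦ y, y ↦ 1/(xy)` on `k(x,y)`, with
`ω ∈ k` a primitive cube root of unity, the elements
`u = (1 + ω⁻¹x + ωxy)/(1 + x + xy)` and `v = (1 + ωx + ω⁻¹xy)/(1 + x + xy)`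
satisfy `k(u,v) = k(x,y)`, `σ(u) = ωu` and `σ(v) = ω⁻¹v`. -/
theorem stmt3 (k F : Type) [Field k] [Field F] [Algebra k F]
    (h3 : (3 : k) ≠ 0) (ω : k) (hω : ω ^ 2 + ω + 1 = 0)
    (x y : F) (hind : AlgebraicIndependent k ![x, y])
    (hadj : IntermediateField.adjoin k {x, y} = ⊤)
    (σ : F ≃ₐ[k] F)
    (hx : σ x = y) (hy : σ y = 1 / (x * y))
    (u v : F)
    (hu : u = (1 + (algebraMap k F ω)⁻¹ * x + algebraMap k F ω * (x * y)) /
        (1 + x + x * y))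
    (hv : v = (1 + algebraMap k F ω * x + (algebraMap k F ω)⁻¹ * (x * y)) /
        (1 + x + x * y)) :
    IntermediateField.adjoin k {u, v} = ⊤ ∧
    σ u = algebraMap k F ω * u ∧ σ v = (algebraMap k F ω)⁻¹ * v := by
  set w := algebraMap k F ω with hw
  have hω' : w ^ 2 + w + 1 = 0 := by
    have := congrArg (algebraMap k F) hω
    simpa using this
  have hw3 : w ^ 3 = 1 := by linear_combination (w - 1) * hω'
  have hwne : w ≠ 0 := by
    intro h; rw [h] at hω'; simp at hω'
  have hwinv : w⁻¹ = w ^ 2 := inv_eq_of_mul_eq_one_right (by linear_combination hw3)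
  -- nonvanishing from algebraic independence
  have key : ∀ p : MvPolynomial (Fin 2) k, MvPolynomial.aeval ![x, y] p = 0 → p = 0 := by
    intro p hp
    apply hind
    simpa using hp
  have hxne : x ≠ 0 := by
    intro h
    exact MvPolynomial.X_ne_zero 0 (key (MvPolynomial.X 0) (by simp [h]))
  have hyne : y ≠ 0 := by
    intro h
    exact MvPolynomial.X_ne_zero 1 (key (MvPolynomial.X 1) (by simp [h]))
  have hDne : (1 : F) + x + x * y ≠ 0 := by
    intro h
    have h0 := key (1 + MvPolynomial.X 0 + MvPolynomial.X 0 * MvPolynomial.X 1)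
      (by simp [← h])
    have := congrArg (MvPolynomial.eval (fun _ => (0 : k))) h0
    simp at this
  have h3F : (3 : F) ≠ 0 := by
    intro hc
    apply h3
    apply (algebraMap k F).injective
    rw [map_ofNat, map_zero]
    exact hc
  -- key identities
  have hsum : (1 + u + v) * (1 + x + x * y) = 3 := by
    rw [hu, hv, hwinv]
    field_simp
    linear_combination (x + x * y) * hω'
  have hx2 : (1 + w * u + w ^ 2 * v) * (1 + x + x * y) = 3 * x := by
    rw [hu, hv, hwinv]
    field_simp
    linear_combination (x * y) * w * hω' + x * (w + 1) * hω' + x * hw3 + (x * y * (w ^ 2 - 2 * w + 1) - 2 * x + 1) * hω'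
  have hx3 : (1 + w ^ 2 * u + w * v) * (1 + x + x * y) = 3 * (x * y) := by
    rw [hu, hv, hwinv]
    field_simp
    linear_combination x * w * hω' + (x * y) * (w + 1) * hω' + (x * y) * hw3 + (x * (w ^ 2 - 2 * w + 1) - 2 * x * y + 1) * hω'
  have hsne : (1 + u + v) ≠ 0 := by
    intro h; rw [h, zero_mul] at hsum; exact h3F hsum.symm
  have hxeq : x * (1 + u + v) = 1 + w * u + w ^ 2 * v :=
    mul_right_cancel₀ hDne (by linear_combination x * hsum - hx2)
  have hxyeq : (x * y) * (1 + u + v) = 1 + w ^ 2 * u + w * v :=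
    mul_right_cancel₀ hDne (by linear_combination (x * y) * hsum - hx3)
  set K := IntermediateField.adjoin k {u, v} with hK
  have huK : u ∈ K := IntermediateField.subset_adjoin k _ (Set.mem_insert _ _)
  have hvK : v ∈ K := IntermediateField.subset_adjoin k _ (Set.mem_insert_of_mem _ rfl)
  have hwK : w ∈ K := K.algebraMap_mem ω
  have hxK : x ∈ K := by
    have hx' : x = (1 + w * u + w ^ 2 * v) / (1 + u + v) := by
      rw [eq_div_iff hsne]; exact hxeq
    rw [hx']
    exact div_mem (add_mem (add_mem (one_mem K) (mul_mem hwK huK))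
      (mul_mem (pow_mem hwK 2) hvK)) (add_mem (add_mem (one_mem K) huK) hvK)
  have hxyK : x * y ∈ K := by
    have hxy' : x * y = (1 + w ^ 2 * u + w * v) / (1 + u + v) := by
      rw [eq_div_iff hsne]; exact hxyeq
    rw [hxy']
    exact div_mem (add_mem (add_mem (one_mem K) (mul_mem (pow_mem hwK 2) huK))
      (mul_mem hwK hvK)) (add_mem (add_mem (one_mem K) huK) hvK)
  have hyK : y ∈ K := by
    have hy' : y = (x * y) / x := (mul_div_cancel_left₀ y hxne).symm
    rw [hy']
    exact div_mem hxyK hxK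
  have hadjK : K = ⊤ := by
    apply le_antisymm le_top
    rw [← hadj]
    apply IntermediateField.adjoin_le_iff.mpr
    rintro z hz
    rcases hz with rfl | rfl
    · exact hxK
    · exact hyK
  have hσw : σ w = w := by rw [hw]; exact σ.commutes ω
  refine ⟨hadjK, ?_, ?_⟩
  · rw [hu]
    rw [map_div₀]
    simp only [map_add, map_mul, map_one, map_inv₀, hσw, hx, hy]
    rw [hwinv]
    have hEne : y + y * x + y ^ 2 * x ≠ 0 := by
      have h' : y + y * x + y ^ 2 * x = y * (1 + x + x * y) := by ring
      rw [h']
      exact mul_ne_zero hyne hDne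
    have heq : (1 + y + y * (1 / (x * y))) * x = 1 + x + x * y := by
      field_simp
      ring
    have hD1ne : 1 + y + y * (1 / (x * y)) ≠ 0 := by
      intro h
      rw [h, zero_mul] at heq
      exact hDne heq.symm
    conv_rhs => rw [← mul_div_assoc]
    rw [div_eq_div_iff hD1ne hDne]
    field_simp
    linear_combination (-(x + x ^ 2 + y * x ^ 2)) * hw3
  · rw [hv]
    rw [map_div₀]
    simp only [map_add, map_mul, map_one, map_inv₀, hσw, hx, hy]
    rw [hwinv]
    have heq : (1 + y + y * (1 / (x * y))) * x = 1 + x + x * y := by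
      field_simp
      ring
    have hD1ne : 1 + y + y * (1 / (x * y)) ≠ 0 := by
      intro h
      rw [h, zero_mul] at heq
      exact hDne heq.symm
    conv_rhs => rw [← mul_div_assoc]
    rw [div_eq_div_iff hD1ne hDne]
    field_simp
    linear_combination (-(x + x ^ 2 + y * x ^ 2) - w * (y * x + y * x ^ 2 + y ^ 2 * x ^ 2)) * hw3
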